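/- Let X := {(x, y) ∈ ℝ² : 0 < x < 1 and |y| ≤ exp(−1/x²)}. Then for every natural number m, the function (x, y) ↦ x^{−m} is Lebesgue-integrable on X (with respect to the 2-dimensional Lebesgue measure). -/

import Mathlib

open MeasureTheory Set

lemma aux_pow_le_exp (n : ℕ) {u : ℝ} (hu : 0 ≤ u) :
    u ^ n ≤ n.factorial * Real.exp u := by
  have h1 : u ^ n / n.factorial ≤ Real.exp u := by
    calc u ^ n / n.factorial
        ≤ ∑ i ∈ Finset.range (n + 1), u ^ i / i.factorial := by
          exact Finset.single_le_sum (f := fun i => u ^ i / (i.factorial : ℝ))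
            (fun i _ => by positivity) (Finset.self_mem_range_succ n)
      _ ≤ Real.exp u := Real.sum_le_exp_of_nonneg hu (n + 1)
  have hf : (0 : ℝ) < n.factorial := by
    exact_mod_cast n.factorial_pos
  calc u ^ n = n.factorial * (u ^ n / n.factorial) := by field_simp
    _ ≤ n.factorial * Real.exp u := by
        exact mul_le_mul_of_nonneg_left h1 hf.le

lemma aux_abs_rpow_integrable :
    IntegrableOn (fun y : ℝ => |y| ^ (-(1/2 : ℝ))) (Ioc (-1) 1) volume := by
  set r : ℝ := -(1/2 : ℝ) with hr
  have hpos : IntervalIntegrable (fun y : ℝ => |y| ^ r) volume 0 1 := by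
    have h0 : IntervalIntegrable (fun y : ℝ => y ^ r) volume 0 1 :=
      intervalIntegral.intervalIntegrable_rpow' (by norm_num [hr])
    rw [intervalIntegrable_iff] at h0 ⊢
    apply h0.congr_fun _ measurableSet_uIoc
    intro y hy
    rw [Set.uIoc_of_le (by norm_num : (0:ℝ) ≤ 1)] at hy
    show y ^ r = |y| ^ r
    rw [abs_of_pos hy.1]
  have hneg : IntervalIntegrable (fun y : ℝ => |y| ^ r) volume (-1) 0 := by
    have := (IntervalIntegrable.iff_comp_neg
      (f := fun y : ℝ => |y| ^ r) (a := (1:ℝ)) (b := 0)).1 hpos.symm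
    simpa using this
  have h := hneg.trans hpos
  rw [intervalIntegrable_iff] at h
  simpa [Set.uIoc_of_le (by norm_num : (-1:ℝ) ≤ 1)] using h

/-- On the flat cusp `X = {(x,y) : 0 < x < 1, |y| ≤ exp(−1/x²)}`, the function
`(x,y) ↦ x^{−m}` is Lebesgue-integrable for every `m ∈ ℕ`. -/
theorem stmt5 (m : ℕ) :
    IntegrableOn (fun p : ℝ × ℝ => p.1 ^ (-(m : ℤ)))
      {p : ℝ × ℝ | 0 < p.1 ∧ p.1 < 1 ∧ |p.2| ≤ Real.exp (-(1 / p.1 ^ 2))} volume := by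
  set r : ℝ := -(1/2 : ℝ) with hr
  set C : ℝ := (2:ℝ) ^ m * m.factorial with hC
  set S : Set (ℝ × ℝ) :=
    {p : ℝ × ℝ | 0 < p.1 ∧ p.1 < 1 ∧ |p.2| ≤ Real.exp (-(1 / p.1 ^ 2))} with hSdef
  -- the dominating function
  set h : ℝ × ℝ → ℝ := fun p =>
    (Ioo (0:ℝ) 1).indicator (fun _ => (1:ℝ)) p.1 *
      (Ioc (-1:ℝ) 1).indicator (fun y => C * |y| ^ r) p.2 with hdef
  have hS : MeasurableSet S := by
    rw [hSdef]
    simp only [Set.setOf_and]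
    refine MeasurableSet.inter (measurableSet_lt measurable_const measurable_fst)
      (MeasurableSet.inter (measurableSet_lt measurable_fst measurable_const) ?_)
    exact measurableSet_le measurable_snd.abs
      ((measurable_const.div (measurable_fst.pow_const 2)).neg.exp)
  have hInt : Integrable h volume := by
    rw [hdef, Measure.volume_eq_prod]
    apply Integrable.mul_prod
    · rw [integrable_indicator_iff measurableSet_Ioo]
      exact integrableOn_const (by simp [Real.volume_Ioo])
    · rw [integrable_indicator_iff measurableSet_Ioc]
      exact aux_abs_rpow_integrable.const_mul C
  have hmeas : Measurable (fun p : ℝ × ℝ => p.1 ^ (-(m : ℤ))) := by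
    have : (fun p : ℝ × ℝ => p.1 ^ (-(m : ℤ))) = fun p => (p.1 ^ m)⁻¹ := by
      funext p; rw [zpow_neg, zpow_natCast]
    rw [this]
    exact (measurable_fst.pow_const m).inv
  have hy0 : ∀ᵐ p : ℝ × ℝ, p.2 ≠ (0:ℝ) := by
    rw [ae_iff]
    have hset : {p : ℝ × ℝ | ¬ p.2 ≠ 0} = Set.univ ×ˢ ({0} : Set ℝ) := by
      ext ⟨a, b⟩; simp [eq_comm]
    rw [hset, Measure.volume_eq_prod, Measure.prod_prod]
    simp
  refine Integrable.mono hInt.integrableOn hmeas.aestronglyMeasurable.restrict ?_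
  filter_upwards [ae_restrict_mem hS, ae_restrict_of_ae hy0] with p hp hpy
  obtain ⟨hx0, hx1, hyb⟩ := hp
  set x := p.1; set y := p.2
  have hylt : |y| < 1 := lt_of_le_of_lt hyb (by
    have h1 : (0:ℝ) < 1 / x ^ 2 := by positivity
    calc Real.exp (-(1 / x ^ 2)) < Real.exp 0 := Real.exp_lt_exp.2 (by linarith)
      _ = 1 := Real.exp_zero)
  have hymem : y ∈ Ioc (-1:ℝ) 1 := by
    rw [abs_lt] at hylt
    constructor <;> [linarith [hylt.1]; linarith [hylt.2]]
  have hxmem : x ∈ Ioo (0:ℝ) 1 := ⟨hx0, hx1⟩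
  have hyabs : (0:ℝ) < |y| := abs_pos.2 hpy
  -- compute h p
  have hhp : h p = C * |y| ^ r := by
    rw [hdef]
    show (Ioo (0:ℝ) 1).indicator (fun _ => (1:ℝ)) x * (Ioc (-1:ℝ) 1).indicator (fun y => C * |y| ^ r) y = _
    simp only [Set.indicator_of_mem hxmem, Set.indicator_of_mem hymem, one_mul]
  -- key estimate
  set t : ℝ := 1 / x ^ 2 with ht
  have htpos : (0:ℝ) < t := by positivity
  have hxinv : (1:ℝ) ≤ x⁻¹ := (one_le_inv_iff₀.2 ⟨hx0, hx1.le⟩)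
  have hxt : x⁻¹ ≤ t := by
    have : x⁻¹ ≤ x⁻¹ * x⁻¹ := le_mul_of_one_le_left (by positivity) hxinv
    calc x⁻¹ ≤ x⁻¹ * x⁻¹ := this
      _ = t := by rw [ht]; rw [pow_two]; field_simp
  have hexp_rpow : Real.exp (-t) ^ r = Real.exp (t / 2) := by
    rw [← Real.exp_mul, hr]
    ring_nf
  have hrle : Real.exp (t / 2) ≤ |y| ^ r := by
    rw [← hexp_rpow]
    exact Real.rpow_le_rpow_of_nonpos hyabs (by rw [ht]; exact hyb) (by norm_num [hr])
  have key : x ^ (-(m:ℤ)) ≤ C * |y| ^ r := by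
    calc x ^ (-(m:ℤ)) = (x⁻¹) ^ m := by rw [zpow_neg, zpow_natCast, inv_pow]
      _ ≤ t ^ m := pow_le_pow_left₀ (by positivity) hxt m
      _ = 2 ^ m * (t / 2) ^ m := by rw [← mul_pow]; congr 1; ring
      _ ≤ 2 ^ m * (m.factorial * Real.exp (t / 2)) := by
          exact mul_le_mul_of_nonneg_left (aux_pow_le_exp m (by positivity)) (by positivity)
      _ ≤ 2 ^ m * (m.factorial * (|y| ^ r)) := by
          apply mul_le_mul_of_nonneg_left _ (by positivity)
          exact mul_le_mul_of_nonneg_left hrle (by positivity)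
      _ = C * |y| ^ r := by rw [hC]; ring
  have hnonneg : (0:ℝ) ≤ x ^ (-(m:ℤ)) := by positivity
  rw [Real.norm_eq_abs, Real.norm_eq_abs, abs_of_nonneg hnonneg, hhp,
    abs_of_nonneg (by positivity)]
  exact key
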